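/- Let S be a finite singleton-rich semigroup, s, t ∈ S, and define the sequence s^φ₀ = s, t^φ₀ = t, s^φ_{i+1} = s^φ_i ((s^φ_i)* t^φ_i)⁺, t^φ_{i+1} = (s^φ_i)* t^φ_i. Then for all i ≥ 0: s^φ_{i+1} = s · φ(s^φ_i, t^φ_i) and t^φ_{i+1} = φ(s^φ_i, t^φ_i) · t, where φ(x,y) = (x* y)⁺. Moreover φ(s^φ_i, t^φ_i) = φ(s^φ_i, t) for all i ≥ 0. -/
import Mathlib


open scoped Classical

/-- φ*(s): the idempotent right identities of `s`. -/
def rIds {S : Type*} [Mul S] (s : S) : Set S := {e | e * e = e ∧ s * e = s}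

/-- φ⁺(s): the idempotent left identities of `s`. -/
def lIds {S : Type*} [Mul S] (s : S) : Set S := {e | e * e = e ∧ e * s = s}

/-- `x` is the (necessarily unique) element of a singleton kernel (minimal ideal) of the
subsemigroup `T`: `{x}` is an ideal of `T`, hence the minimal ideal of `T`. -/
def IsKer {S : Type*} [Semigroup S] (T : Subsemigroup S) (x : S) : Prop :=
  x ∈ T ∧ ∀ a ∈ T, a * x = x ∧ x * a = x

/-- The natural partial order on idempotents: `e ≤ f` iff `ef = fe = e`. -/
def nle {S : Type*} [Mul S] (e f : S) : Prop := e * f = e ∧ f * e = e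

/-- The relation `≪`: `s ≪ t` iff `s = s⁺ t s*`, where `sa s = s*` and `pl s = s⁺`. -/
def ll {S : Type*} [Mul S] (sa pl : S → S) (s t : S) : Prop := s = pl s * t * sa s

/-- φ(x,y) = (x* y)⁺. -/
def phiF {S : Type*} [Mul S] (sa pl : S → S) (x y : S) : S := pl (sa x * y)

/-- ψ(x,y) = (x y⁺)*. -/
def psiF {S : Type*} [Mul S] (sa pl : S → S) (x y : S) : S := sa (x * pl y)

/-- The φ-sequence: `(s^φ₀, t^φ₀) = (s, t)`,
`s^φ_{i+1} = s^φ_i φ(s^φ_i, t^φ_i)`, `t^φ_{i+1} = (s^φ_i)* t^φ_i`. -/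
def phiSeq {S : Type*} [Mul S] (sa pl : S → S) (s t : S) : ℕ → S × S
  | 0 => (s, t)
  | i + 1 =>
      let p := phiSeq sa pl s t i
      (p.1 * phiF sa pl p.1 p.2, sa p.1 * p.2)

/-- The ψ-sequence: `(s^ψ₀, t^ψ₀) = (s, t)`,
`s^ψ_{i+1} = s^ψ_i (t^ψ_i)⁺`, `t^ψ_{i+1} = ψ(s^ψ_i, t^ψ_i) t^ψ_i`. -/
def psiSeq {S : Type*} [Mul S] (sa pl : S → S) (s t : S) : ℕ → S × S
  | 0 => (s, t)
  | i + 1 =>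
      let p := psiSeq sa pl s t i
      (p.1 * pl p.2, psiF sa pl p.1 p.2 * p.2)

section Aux

variable {S : Type*} [Semigroup S] {sa pl : S → S}

/-- Every element of the closure of the right identities of `x` is a right identity. -/
lemma aux_rid {x a : S} (ha : a ∈ Subsemigroup.closure (rIds x)) : x * a = x := by
  have h : Subsemigroup.closure (rIds x) ≤
      ⟨{a | x * a = x}, by
        intro a b (ha : x * a = x) (hb : x * b = x)
        show x * (a * b) = x
        rw [← mul_assoc, ha, hb]⟩ :=
    Subsemigroup.closure_le.2 (fun e he => he.2)
  exact h ha

/-- Every element of the closure of the left identities of `x` is a left identity. -/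
lemma aux_lid {x a : S} (ha : a ∈ Subsemigroup.closure (lIds x)) : a * x = x := by
  have h : Subsemigroup.closure (lIds x) ≤
      ⟨{a | a * x = x}, by
        intro a b (ha : a * x = x) (hb : b * x = x)
        show a * b * x = x
        rw [mul_assoc, hb, ha]⟩ :=
    Subsemigroup.closure_le.2 (fun e he => he.2)
  exact h ha

lemma aux_mul_sa (hsa : ∀ s : S, IsKer (Subsemigroup.closure (rIds s)) (sa s)) (x : S) :
    x * sa x = x := aux_rid (hsa x).1

lemma aux_pl_mul (hpl : ∀ s : S, IsKer (Subsemigroup.closure (lIds s)) (pl s)) (x : S) :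
    pl x * x = x := aux_lid (hpl x).1

lemma aux_sa_idem (hsa : ∀ s : S, IsKer (Subsemigroup.closure (rIds s)) (sa s)) (x : S) :
    sa x * sa x = sa x := ((hsa x).2 _ (hsa x).1).1

lemma aux_pl_idem (hpl : ∀ s : S, IsKer (Subsemigroup.closure (lIds s)) (pl s)) (x : S) :
    pl x * pl x = pl x := ((hpl x).2 _ (hpl x).1).1

/-- An idempotent right identity of `x` absorbs into `sa x` on both sides. -/
lemma aux_sa_absorb (hsa : ∀ s : S, IsKer (Subsemigroup.closure (rIds s)) (sa s))
    {x e : S} (he : e ∈ rIds x) : e * sa x = sa x ∧ sa x * e = sa x :=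
  (hsa x).2 e (Subsemigroup.subset_closure he)

/-- An idempotent left identity of `x` absorbs into `pl x` on both sides. -/
lemma aux_pl_absorb (hpl : ∀ s : S, IsKer (Subsemigroup.closure (lIds s)) (pl s))
    {x e : S} (he : e ∈ lIds x) : e * pl x = pl x ∧ pl x * e = pl x :=
  (hpl x).2 e (Subsemigroup.subset_closure he)

/-- If `e` is an idempotent, then `pl (e * y) * y = e * y`. -/
lemma aux_pl_key (hpl : ∀ s : S, IsKer (Subsemigroup.closure (lIds s)) (pl s))
    {e : S} (he : e * e = e) (y : S) : pl (e * y) * y = e * y := by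
  have hmem : e ∈ lIds (e * y) := ⟨he, by rw [← mul_assoc, he]⟩
  have h1 : pl (e * y) * e = pl (e * y) := (aux_pl_absorb hpl hmem).2
  calc pl (e * y) * y = pl (e * y) * e * y := by rw [h1]
    _ = pl (e * y) * (e * y) := by rw [mul_assoc]
    _ = e * y := aux_pl_mul hpl _

end Aux

/-- `s^φ_{i+1} = s φ(s^φ_i, t^φ_i)`, `t^φ_{i+1} = φ(s^φ_i, t^φ_i) t`, and
`φ(s^φ_i, t^φ_i) = φ(s^φ_i, t)` for all `i ≥ 0`. -/
theorem stmt10 {S : Type*} [Semigroup S] [Fintype S] (sa pl : S → S)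
    (hsa : ∀ s : S, IsKer (Subsemigroup.closure (rIds s)) (sa s))
    (hpl : ∀ s : S, IsKer (Subsemigroup.closure (lIds s)) (pl s))
    (s t : S) :
    ∀ i : ℕ,
      (phiSeq sa pl s t (i + 1)).1 = s * phiF sa pl (phiSeq sa pl s t i).1 (phiSeq sa pl s t i).2 ∧
      (phiSeq sa pl s t (i + 1)).2 = phiF sa pl (phiSeq sa pl s t i).1 (phiSeq sa pl s t i).2 * t ∧
      phiF sa pl (phiSeq sa pl s t i).1 (phiSeq sa pl s t i).2 =
        phiF sa pl (phiSeq sa pl s t i).1 t := by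
  intro i
  induction i with
  | zero =>
    refine ⟨rfl, ?_, rfl⟩
    show sa s * t = pl (sa s * t) * t
    exact (aux_pl_key hpl (aux_sa_idem hsa s) t).symm
  | succ i ih =>
    obtain ⟨hA, hB, hC⟩ := ih
    set p := phiSeq sa pl s t i with hp
    set s' := (phiSeq sa pl s t (i + 1)).1 with hs'
    set t' := (phiSeq sa pl s t (i + 1)).2 with ht'
    set φi := phiF sa pl p.1 p.2 with hφi
    -- basic facts
    have hs'eq : s' = p.1 * φi := rfl
    have ht'eq : t' = sa p.1 * p.2 := rfl
    have hφidem : φi * φi = φi := aux_pl_idem hpl _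
    have hmem : φi ∈ rIds s' := ⟨hφidem, by rw [hs'eq, mul_assoc, hφidem]⟩
    have habs : φi * sa s' = sa s' ∧ sa s' * φi = sa s' := aux_sa_absorb hsa hmem
    have key : sa s' * t' = sa s' * t := by rw [hB, ← mul_assoc, habs.2]
    -- φ' = phiF sa pl s' t' = pl (sa s' * t')
    have hC' : phiF sa pl s' t' = phiF sa pl s' t := congrArg pl key
    have hlmem : φi ∈ lIds (sa s' * t') := ⟨hφidem, by rw [← mul_assoc, habs.1]⟩
    have habsφ : φi * phiF sa pl s' t' = phiF sa pl s' t' := (aux_pl_absorb hpl hlmem).1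
    refine ⟨?_, ?_, hC'⟩
    · show s' * phiF sa pl s' t' = s * phiF sa pl s' t'
      generalize hg : phiF sa pl s' t' = w at habsφ ⊢
      rw [hA, mul_assoc, habsφ]
    · show sa s' * t' = phiF sa pl s' t' * t
      rw [hC', key]
      exact (aux_pl_key hpl (aux_sa_idem hsa s') t).symm
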